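/- arXiv:1602.04095 — 4 statements merged into one kernel-verified Lean document; each statement's English description precedes it below -/
import Mathlib

section
/- There exists a prime number p with p ≤ 2^(c·d·log n) for some absolute constant c, and a linear function f : ℤ^n → 𝔽_p, such that f is injective when restricted to Boolean vectors with at most d nonzero coordinates. -/
/-- A vector in `ℤ^n` is a `d`-sparse Boolean vector if all its coordinates are
`0` or `1` and at most `d` of them are nonzero. -/
def SparseBool (n d : ℕ) (v : Fin n → ℤ) : Prop :=
  (∀ i, v i = 0 ∨ v i = 1) ∧ (Finset.univ.filter fun i => v i ≠ 0).card ≤ d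

open Finset

/-- The number of solutions of a linear equation with some unit coefficient is at most
`p ^ (n-1)`. -/
lemma ker_card_le {p n : ℕ} [NeZero p] (c : Fin n → ZMod p) (j : Fin n)
    (hc : IsUnit (c j)) :
    (Finset.univ.filter fun a : Fin n → ZMod p => ∑ i, c i * a i = 0).card
      ≤ p ^ (n - 1) := by
  classical
  have htarget : Fintype.card ({i : Fin n // i ≠ j} → ZMod p) = p ^ (n - 1) := by
    rw [Fintype.card_fun, ZMod.card]
    congr 1
    have : Fintype.card {i : Fin n // i ≠ j} = Fintype.card (Fin n) - 1 := by
      rw [Fintype.card_subtype_compl, Fintype.card_subtype_eq]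
    simpa using this
  rw [← htarget, ← Finset.card_univ]
  apply Finset.card_le_card_of_injOn (fun a => fun i : {i : Fin n // i ≠ j} => a i.1)
  · intro a _; exact mem_univ _
  · intro a ha b hb hab
    simp only [Finset.coe_filter, Set.mem_setOf_eq, mem_univ, true_and] at ha hb
    have hres : ∀ i : Fin n, i ≠ j → a i = b i := by
      intro i hi
      exact congrFun hab ⟨i, hi⟩
    have hsum : ∀ x : Fin n → ZMod p, (∑ i, c i * x i = 0) →
        c j * x j = -∑ i ∈ univ.erase j, c i * x i := by
      intro x hx
      have := Finset.add_sum_erase univ (fun i => c i * x i) (mem_univ j)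
      rw [hx] at this
      linear_combination this
    have h1 := hsum a ha
    have h2 := hsum b hb
    have herase : ∑ i ∈ univ.erase j, c i * a i = ∑ i ∈ univ.erase j, c i * b i := by
      apply Finset.sum_congr rfl
      intro i hi
      rw [hres i (Finset.mem_erase.mp hi).1]
    have : c j * a j = c j * b j := by rw [h1, h2, herase]
    have hj : a j = b j := hc.mul_left_cancel this
    funext i
    by_cases hij : i = j
    · subst hij; exact hj
    · exact hres i hij

theorem sparse_linear_sketch :
    ∃ c : ℕ, 0 < c ∧ ∀ n d : ℕ, 2 ≤ n → 0 < d →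
      ∃ p : ℕ, p.Prime ∧ p ≤ 2 ^ (c * d * Nat.log 2 n) ∧
        ∃ f : (Fin n → ℤ) →ₗ[ℤ] ZMod p,
          Set.InjOn f {v | SparseBool n d v} := by
  classical
  refine ⟨9, by norm_num, ?_⟩
  intro n d hn hd
  have hn0 : 0 < n := by omega
  set m : ℕ := n ^ (4 * d) with hm
  have hm0 : m ≠ 0 := by positivity
  obtain ⟨p, hp, hmp, hp2⟩ := Nat.exists_prime_lt_and_le_two_mul m hm0
  haveI : Fact p.Prime := ⟨hp⟩
  haveI : NeZero p := ⟨hp.ne_zero⟩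
  have hL : 1 ≤ Nat.log 2 n := Nat.log_pos (by norm_num) hn
  refine ⟨p, hp, ?_, ?_⟩
  · -- the size bound
    set L := Nat.log 2 n with hLdef
    have hnle : n ≤ 2 ^ (2 * L) := by
      have h1 : n < 2 ^ (L + 1) := Nat.lt_pow_succ_log_self (by norm_num) n
      have h2 : L + 1 ≤ 2 * L := by omega
      calc n ≤ 2 ^ (L + 1) := h1.le
        _ ≤ 2 ^ (2 * L) := Nat.pow_le_pow_right (by norm_num) h2
    have hml : m ≤ 2 ^ (8 * d * L) := by
      calc m = n ^ (4 * d) := rfl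
        _ ≤ (2 ^ (2 * L)) ^ (4 * d) := Nat.pow_le_pow_left hnle _
        _ = 2 ^ (8 * d * L) := by rw [← pow_mul]; ring_nf
    calc p ≤ 2 * m := hp2
      _ ≤ 2 ^ (8 * d * L + 1) := by
          rw [pow_succ, mul_comm]
          exact Nat.mul_le_mul_right 2 hml
      _ ≤ 2 ^ (9 * d * L) := by
          apply Nat.pow_le_pow_right (by norm_num)
          have : 1 ≤ d * L := Nat.mul_le_mul hd hL
          nlinarith
  · -- the construction
    set SB : Finset (Fin n → Bool) :=
      Finset.univ.filter (fun b => (Finset.univ.filter fun i => b i = true).card ≤ d)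
      with hSBdef
    set Q : Finset ((Fin n → Bool) × (Fin n → Bool)) :=
      (SB ×ˢ SB).filter (fun q => q.1 ≠ q.2) with hQdef
    set C : ((Fin n → Bool) × (Fin n → Bool)) → Fin n → ZMod p :=
      fun q i => (if q.1 i then 1 else 0) - (if q.2 i then 1 else 0) with hCdef
    set K : ((Fin n → Bool) × (Fin n → Bool)) → Finset (Fin n → ZMod p) :=
      fun q => Finset.univ.filter (fun a => ∑ i, C q i * a i = 0) with hKdef
    -- kernel cardinality bound
    have hK : ∀ q ∈ Q, (K q).card ≤ p ^ (n - 1) := by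
      intro q hq
      have hne : q.1 ≠ q.2 := (Finset.mem_filter.mp hq).2
      obtain ⟨j, hj⟩ : ∃ j, q.1 j ≠ q.2 j := by
        by_contra h
        push_neg at h
        exact hne (funext h)
      have hunit : IsUnit (C q j) := by
        rcases Bool.eq_false_or_eq_true (q.1 j) with h1 | h1 <;>
        rcases Bool.eq_false_or_eq_true (q.2 j) with h2 | h2 <;>
          simp [hCdef, h1, h2] at hj ⊢
      exact ker_card_le (C q) j hunit
    -- cardinality of SB
    have hSB : SB.card ≤ n ^ (2 * d) := by
      have h1 : SB.card ≤
          ((range (d + 1)).biUnion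
            (fun k => powersetCard k (Finset.univ : Finset (Fin n)))).card := by
        apply Finset.card_le_card_of_injOn
          (fun b => Finset.univ.filter (fun i => b i = true))
        · intro b hb
          simp only [Finset.mem_coe, Finset.mem_biUnion, Finset.mem_range, Finset.mem_powersetCard_univ]
          refine ⟨(Finset.univ.filter fun i => b i = true).card, ?_, rfl⟩
          have := (Finset.mem_filter.mp hb).2
          omega
        · intro b hb b' hb' hbb
          funext i
          have := Finset.ext_iff.mp hbb i
          simp only [Finset.mem_filter, Finset.mem_univ, true_and] at this
          cases hbi : b i <;> cases hbi' : b' i <;> simp_all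
      have h2 : ((range (d + 1)).biUnion
          (fun k => powersetCard k (Finset.univ : Finset (Fin n)))).card
            ≤ (d + 1) * n ^ d := by
        calc _ ≤ ∑ k ∈ range (d + 1),
              (powersetCard k (Finset.univ : Finset (Fin n))).card :=
            Finset.card_biUnion_le
          _ ≤ ∑ _k ∈ range (d + 1), n ^ d := by
              apply Finset.sum_le_sum
              intro k hk
              rw [Finset.card_powersetCard, Finset.card_univ, Fintype.card_fin]
              calc n.choose k ≤ n ^ k := Nat.choose_le_pow n k
                _ ≤ n ^ d := Nat.pow_le_pow_right hn0 (by
                    simp only [Finset.mem_range] at hk; omega)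
          _ = (d + 1) * n ^ d := by rw [Finset.sum_const, Finset.card_range, smul_eq_mul]
      have h3 : d + 1 ≤ n ^ d := by
        calc d + 1 ≤ 2 ^ d := Nat.succ_le_of_lt (Nat.lt_two_pow_self (n := d))
          _ ≤ n ^ d := Nat.pow_le_pow_left hn d
      calc SB.card ≤ (d + 1) * n ^ d := le_trans h1 h2
        _ ≤ n ^ d * n ^ d := Nat.mul_le_mul_right _ h3
        _ = n ^ (2 * d) := by rw [← pow_add]; ring_nf
    have hQcard : Q.card ≤ m := by
      calc Q.card ≤ (SB ×ˢ SB).card := Finset.card_filter_le _ _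
        _ = SB.card * SB.card := Finset.card_product _ _
        _ ≤ n ^ (2 * d) * n ^ (2 * d) := Nat.mul_le_mul hSB hSB
        _ = m := by rw [hm, ← pow_add]; ring_nf
    -- find a good coefficient vector
    have hbad : (Q.biUnion K).card < Fintype.card (Fin n → ZMod p) := by
      have h1 : (Q.biUnion K).card ≤ Q.card * p ^ (n - 1) := by
        calc (Q.biUnion K).card ≤ ∑ q ∈ Q, (K q).card := Finset.card_biUnion_le
          _ ≤ ∑ _q ∈ Q, p ^ (n - 1) := Finset.sum_le_sum hK
          _ = Q.card * p ^ (n - 1) := by rw [Finset.sum_const, smul_eq_mul]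
      have h2 : Fintype.card (Fin n → ZMod p) = p ^ n := by
        rw [Fintype.card_fun, ZMod.card, Fintype.card_fin]
      rw [h2]
      calc (Q.biUnion K).card ≤ Q.card * p ^ (n - 1) := h1
        _ ≤ m * p ^ (n - 1) := Nat.mul_le_mul_right _ hQcard
        _ < p * p ^ (n - 1) := by
            apply Nat.mul_lt_mul_of_lt_of_le hmp (le_refl _)
            exact pow_pos hp.pos _
        _ = p ^ n := by
            rw [← pow_succ']
            congr 1
            omega
    obtain ⟨a, ha⟩ : ∃ a : Fin n → ZMod p, a ∉ Q.biUnion K := by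
      by_contra h
      push_neg at h
      have : (Finset.univ : Finset (Fin n → ZMod p)) ⊆ Q.biUnion K :=
        fun x _ => h x
      have := Finset.card_le_card this
      rw [Finset.card_univ] at this
      omega
    -- the linear map
    refine ⟨{
      toFun := fun v => ∑ i, (v i : ZMod p) * a i
      map_add' := by
        intro u v
        rw [← Finset.sum_add_distrib]
        apply Finset.sum_congr rfl
        intro i _
        simp only [Pi.add_apply]
        push_cast
        ring
      map_smul' := by
        intro k v
        simp only [RingHom.id_apply]
        rw [Finset.smul_sum]
        apply Finset.sum_congr rfl
        intro i _
        simp only [Pi.smul_apply, smul_eq_mul]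
        push_cast
        rw [zsmul_eq_mul]
        push_cast
        ring }, ?_⟩
    intro v hv w hw hfvw
    simp only [Set.mem_setOf_eq, SparseBool] at hv hw
    simp only [LinearMap.coe_mk, AddHom.coe_mk] at hfvw
    by_contra hne
    set b : Fin n → Bool := fun i => decide (v i = 1) with hbdef
    set b' : Fin n → Bool := fun i => decide (w i = 1) with hb'def
    have hvb : ∀ i, (v i : ZMod p) = if b i then 1 else 0 := by
      intro i
      rcases hv.1 i with h | h <;> simp [hbdef, h]
    have hwb : ∀ i, (w i : ZMod p) = if b' i then 1 else 0 := by
      intro i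
      rcases hw.1 i with h | h <;> simp [hb'def, h]
    have hmemSB : ∀ (u : Fin n → ℤ), (∀ i, u i = 0 ∨ u i = 1) →
        (Finset.univ.filter fun i => u i ≠ 0).card ≤ d →
        (fun i => decide (u i = 1)) ∈ SB := by
      intro u hu hcard
      simp only [hSBdef, Finset.mem_filter, Finset.mem_univ, true_and]
      have : (Finset.univ.filter fun i => decide (u i = 1) = true)
          = (Finset.univ.filter fun i => u i ≠ 0) := by
        apply Finset.filter_congr
        intro i _
        rcases hu i with h | h <;> simp [h]
      rw [this]
      exact hcard
    have hbSB : b ∈ SB := hmemSB v hv.1 hv.2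
    have hb'SB : b' ∈ SB := hmemSB w hw.1 hw.2
    have hbne : b ≠ b' := by
      intro h
      apply hne
      funext i
      have h1 : v i = if b i then 1 else 0 := by
        rcases hv.1 i with hh | hh <;> simp [hbdef, hh]
      have h2 : w i = if b' i then 1 else 0 := by
        rcases hw.1 i with hh | hh <;> simp [hb'def, hh]
      rw [h1, h2, h]
    have hQmem : (b, b') ∈ Q := by
      simp only [hQdef, Finset.mem_filter, Finset.mem_product]
      exact ⟨⟨hbSB, hb'SB⟩, hbne⟩
    have hanotK : a ∉ K (b, b') := by
      intro hK'
      exact ha (Finset.mem_biUnion.mpr ⟨(b, b'), hQmem, hK'⟩)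
    apply hanotK
    simp only [hKdef, Finset.mem_filter, Finset.mem_univ, true_and]
    have : ∑ i, C (b, b') i * a i
        = (∑ i, (v i : ZMod p) * a i) - ∑ i, (w i : ZMod p) * a i := by
      rw [← Finset.sum_sub_distrib]
      apply Finset.sum_congr rfl
      intro i _
      rw [hvb i, hwb i]
      simp only [hCdef]
      ring
    rw [this, hfvw, sub_self]
end

section
/- Every finite simple graph on n vertices with girth at least 2r+1 (r ≥ 1) is ⌈n^{1/r}⌉-degenerate; that is, every subgraph of G contains a vertex of degree at most ⌈n^{1/r}⌉. -/
open SimpleGraph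

namespace HighGirthAux

variable {V : Type} [DecidableEq V] {G : SimpleGraph V}

/-- Two distinct paths between the same endpoints yield a cycle whose length
is at most the sum of their lengths. -/
lemma exists_cycle_of_two_paths {w : V} :
    ∀ {v : V} (p q : G.Walk v w), p.IsPath → q.IsPath → p ≠ q →
      ∃ (u : V) (c : G.Walk u u), c.IsCycle ∧ c.length ≤ p.length + q.length := by
  intro v p
  induction p with
  | nil =>
    intro q _ hq hne
    exact absurd (Walk.isPath_iff_eq_nil.mp hq).symm hne
  | @cons v b w h p' ih =>
    intro q hp hq hne
    cases q with
    | nil =>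
      exact absurd (Walk.isPath_iff_eq_nil.mp hp) (by simp)
    | @cons _ c _ h' q' =>
      by_cases hbc : b = c
      · subst hbc
        have hpq' : p' ≠ q' := by
          rintro rfl; exact hne rfl
        obtain ⟨u, cyc, hcyc, hlen⟩ := ih q' ((Walk.cons_isPath_iff h p').mp hp).1
          ((Walk.cons_isPath_iff h' q').mp hq).1 hpq'
        exact ⟨u, cyc, hcyc, by simp only [Walk.length_cons]; omega⟩
      · have hvp' : v ∉ p'.support := ((Walk.cons_isPath_iff h p').mp hp).2
        have hvq' : v ∉ q'.support := ((Walk.cons_isPath_iff h' q').mp hq).2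
        have hedge : s(v, b) ∉ (p'.append (Walk.cons h' q').reverse).edges := by
          rw [Walk.edges_append, List.mem_append]
          rintro (hh | hh)
          · exact hvp' (Walk.fst_mem_support_of_mem_edges _ hh)
          · rw [Walk.edges_reverse, List.mem_reverse, Walk.edges_cons] at hh
            rcases List.mem_cons.mp hh with hh | hh
            · exact hbc (Sym2.congr_right.mp hh)
            · exact hvq' (Walk.fst_mem_support_of_mem_edges _ hh)
        set t := (p'.append (Walk.cons h' q').reverse).bypass with ht
        have htp : t.IsPath := Walk.bypass_isPath _
        have hte : s(v, b) ∉ t.edges := fun hh => hedge (Walk.edges_bypass_subset _ hh)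
        refine ⟨v, Walk.cons h t, SimpleGraph.Path.cons_isCycle ⟨t, htp⟩ h hte, ?_⟩
        have h1 := Walk.length_bypass_le (p'.append (Walk.cons h' q').reverse)
        rw [Walk.length_append, Walk.length_reverse, ← ht] at h1
        simp only [Walk.length_cons] at h1 ⊢
        omega

/-- In a path ending at `w`, at most one edge contains `w`. -/
lemma end_unique_nbr {v w : V} {p : G.Walk v w} (hp : p.IsPath) {u₁ u₂ : V}
    (h1 : s(w, u₁) ∈ p.edges) (h2 : s(w, u₂) ∈ p.edges) : u₁ = u₂ := by
  have hnd : p.support.Nodup := hp.support_nodup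
  have hw_not : w ∉ p.support.dropLast := by
    have hsp := List.dropLast_append_getLast (p.support_ne_nil)
    rw [p.getLast_support] at hsp
    rw [← hsp] at hnd
    have := (List.nodup_append'.mp hnd).2.2
    intro hw
    exact this hw (List.mem_singleton_self w)
  have key : ∀ u : V, s(w, u) ∈ p.edges → ∃ d ∈ p.darts, d.snd = w ∧ d.fst = u := by
    intro u hu
    obtain ⟨d, hd, he⟩ := List.mem_map.mp hu
    rw [SimpleGraph.dart_edge_eq_mk'_iff'] at he
    rcases he with ⟨ha, hb⟩ | ⟨ha, hb⟩
    · exfalso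
      apply hw_not
      rw [← Walk.map_fst_darts]
      exact List.mem_map.mpr ⟨d, hd, ha⟩
    · exact ⟨d, hd, hb, ha⟩
  obtain ⟨d₁, hd₁, hs₁, hf₁⟩ := key u₁ h1
  obtain ⟨d₂, hd₂, hs₂, hf₂⟩ := key u₂ h2
  have hmapnd : (p.darts.map (·.snd)).Nodup := by
    rw [Walk.map_snd_darts]
    exact hnd.tail
  have : d₁ = d₂ :=
    List.inj_on_of_nodup_map hmapnd hd₁ hd₂ (by rw [hs₁, hs₂])
  rw [← hf₁, ← hf₂, this]

/-- If every cycle has length `> L` and `p` is a path of length `< L` ending at `w`,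
then any neighbor of `w` inside the support of `p` is joined to `w` by an edge of `p`. -/
lemma edge_mem_of_adj_end {L : ℕ} (hcyc : ∀ (u : V) (c : G.Walk u u), c.IsCycle → L < c.length)
    {v w u : V} {p : G.Walk v w} (hp : p.IsPath) (hlen : p.length < L)
    (hadj : G.Adj w u) (hu : u ∈ p.support) : s(w, u) ∈ p.edges := by
  by_contra hne
  have hd : (p.dropUntil u hu).IsPath := hp.dropUntil hu
  have hde : s(w, u) ∉ (p.dropUntil u hu).edges :=
    fun hh => hne (Walk.edges_dropUntil_subset _ hu hh)
  have hcycle := SimpleGraph.Path.cons_isCycle ⟨p.dropUntil u hu, hd⟩ hadj hde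
  have := hcyc _ _ hcycle
  have hll := Walk.length_dropUntil_le p hu
  simp only [Walk.length_cons] at this
  omega

lemma concat_isPath' {a b c : V} {p : G.Walk a b} (h : G.Adj b c) (hp : p.IsPath)
    (hc : c ∉ p.support) : (p.concat h).IsPath := by
  rw [← Walk.isPath_reverse_iff, Walk.reverse_concat, Walk.cons_isPath_iff]
  exact ⟨hp.reverse, by simpa [Walk.support_reverse] using hc⟩

end HighGirthAux

open HighGirthAux

/-- A graph is `k`-degenerate if every nonempty (induced) subgraph has a vertex of
degree at most `k`, i.e. every nonempty finite set `s` of vertices contains a vertex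
with at most `k` neighbors inside `s`. -/
def Degenerate {V : Type} [Fintype V] [DecidableEq V]
    (G : SimpleGraph V) [DecidableRel G.Adj] (k : ℕ) : Prop :=
  ∀ s : Finset V, s.Nonempty → ∃ v ∈ s, (s.filter fun u => G.Adj v u).card ≤ k

theorem high_girth_degenerate {V : Type} [Fintype V] [DecidableEq V]
    (G : SimpleGraph V) [DecidableRel G.Adj] (r : ℕ) (hr : 1 ≤ r)
    (hgirth : ((2 * r : ℕ) : ℕ∞) < G.girth) :
    Degenerate G ⌈(Fintype.card V : ℝ) ^ ((1 : ℝ) / r)⌉₊ := by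
  intro s hs
  by_contra hcon
  push_neg at hcon
  set k := ⌈(Fintype.card V : ℝ) ^ ((1 : ℝ) / r)⌉₊ with hkdef
  obtain ⟨v₀, hv₀⟩ := hs
  -- every cycle has length > 2r
  have hcyc : ∀ (u : V) (c : G.Walk u u), c.IsCycle → 2 * r < c.length := by
    intro u c hc
    have h2 : ((2 * r : ℕ) : ℕ∞) < G.egirth := by
      rcases eq_or_ne G.egirth ⊤ with h | h
      · rw [h]; exact ENat.coe_lt_top _
      · rw [← ENat.coe_toNat h]
        exact_mod_cast hgirth
    have h3 : G.egirth ≤ (c.length : ℕ∞) := le_egirth.mp le_rfl u c hc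
    exact_mod_cast lt_of_lt_of_le h2 h3
  -- numeric facts
  have hn1 : 1 ≤ Fintype.card V := Fintype.card_pos_iff.mpr ⟨v₀⟩
  have hk1 : 1 ≤ k := by
    rw [hkdef, Nat.one_le_ceil_iff]
    have h0 : (0:ℝ) < (Fintype.card V : ℝ) := by exact_mod_cast hn1
    positivity
  have hnk : Fintype.card V ≤ k ^ r := by
    have h0 : (0:ℝ) ≤ (Fintype.card V : ℝ) := Nat.cast_nonneg _
    have h1 : (Fintype.card V : ℝ) ^ ((1:ℝ)/r) ≤ k := Nat.le_ceil _
    have h2 : ((Fintype.card V : ℝ) ^ ((1:ℝ)/r)) ^ (r:ℕ) ≤ (k:ℝ) ^ (r:ℕ) :=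
      pow_le_pow_left₀ (Real.rpow_nonneg h0 _) h1 r
    rw [← Real.rpow_natCast ((Fintype.card V : ℝ) ^ ((1:ℝ)/r)) r, ← Real.rpow_mul h0] at h2
    have hrne : (r:ℝ) ≠ 0 := Nat.cast_ne_zero.mpr (by omega)
    rw [one_div_mul_cancel hrne, Real.rpow_one] at h2
    exact_mod_cast h2
  -- the finsets of paths from v₀ of given length inside s
  set A : ℕ → Finset ((w : V) × G.Walk v₀ w) := fun ℓ =>
    Finset.univ.sigma fun w => (G.finsetWalkLength ℓ v₀ w).filter
      fun p => p.IsPath ∧ ∀ x ∈ p.support, x ∈ s with hA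
  have hmemA : ∀ {ℓ : ℕ} {σ : (w : V) × G.Walk v₀ w}, σ ∈ A ℓ ↔
      σ.2.length = ℓ ∧ σ.2.IsPath ∧ ∀ x ∈ σ.2.support, x ∈ s := by
    intro ℓ σ
    obtain ⟨w, p⟩ := σ
    simp [hA, Finset.mem_sigma, Finset.mem_filter, mem_finsetWalkLength_iff]
  -- step 1
  have step1 : k + 1 ≤ (A 1).card := by
    have hv := hcon v₀ hv₀
    have hle : (s.filter fun u => G.Adj v₀ u).card ≤ (A 1).card := by
      apply Finset.card_le_card_of_injOn
        (fun u => if h : G.Adj v₀ u then ⟨u, Walk.cons h Walk.nil⟩ else ⟨v₀, Walk.nil⟩)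
      · intro u hu
        simp only [Finset.mem_coe, Finset.mem_filter] at hu ⊢
        rw [dif_pos hu.2, hmemA]
        refine ⟨by simp, by simp [Walk.cons_isPath_iff, hu.2.ne], ?_⟩
        intro x hx
        simp only [Walk.support_cons, Walk.support_nil, List.mem_cons,
          List.mem_singleton, List.not_mem_nil, or_false] at hx
        rcases hx with rfl | rfl
        · exact hv₀
        · exact hu.1
      · intro u₁ h1 u₂ h2 he
        rw [Finset.mem_coe, Finset.mem_filter] at h1 h2
        simp only [dif_pos h1.2, dif_pos h2.2] at he
        exact congrArg Sigma.fst he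
    omega
  -- extension step
  have step2 : ∀ ℓ, ℓ < r → k * (A ℓ).card ≤ (A (ℓ+1)).card := by
    intro ℓ hℓr
    set ext : ((w : V) × G.Walk v₀ w) → Finset ((w : V) × G.Walk v₀ w) := fun σ =>
      (s.filter fun u => G.Adj σ.1 u ∧ u ∉ σ.2.support).image
        fun u => if h : G.Adj σ.1 u then ⟨u, σ.2.concat h⟩ else σ with hext
    have hcard : ∀ σ ∈ A ℓ, k ≤ (ext σ).card := by
      rintro ⟨w, p⟩ hσ
      obtain ⟨hlen, hp, hsupp⟩ := hmemA.mp hσ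
      have hw : w ∈ s := hsupp w (Walk.end_mem_support p)
      have hX : k + 1 ≤ (s.filter fun u => G.Adj w u).card := hcon w hw
      have hY : ((s.filter fun u => G.Adj w u).filter fun u => u ∈ p.support).card ≤ 1 := by
        rw [Finset.card_le_one]
        intro a ha b hb
        rw [Finset.mem_filter, Finset.mem_filter] at ha hb
        exact end_unique_nbr hp
          (edge_mem_of_adj_end hcyc hp (by omega) ha.1.2 ha.2)
          (edge_mem_of_adj_end hcyc hp (by omega) hb.1.2 hb.2)
      have hsplit : (s.filter fun u => G.Adj w u ∧ u ∉ p.support)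
          = (s.filter fun u => G.Adj w u) \
            ((s.filter fun u => G.Adj w u).filter fun u => u ∈ p.support) := by
        ext u
        simp only [Finset.mem_filter, Finset.mem_sdiff]
        tauto
      have hkfil : k ≤ (s.filter fun u => G.Adj w u ∧ u ∉ p.support).card := by
        rw [hsplit, Finset.card_sdiff_of_subset (Finset.filter_subset _ _)]
        omega
      refine le_trans hkfil (le_of_eq ?_)
      rw [hext]
      apply (Finset.card_image_of_injOn ?_).symm
      intro u₁ h1 u₂ h2 he
      rw [Finset.mem_coe, Finset.mem_filter] at h1 h2
      simp only [dif_pos h1.2.1, dif_pos h2.2.1] at he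
      exact congrArg Sigma.fst he
    have hsub : ∀ σ ∈ A ℓ, ext σ ⊆ A (ℓ+1) := by
      rintro ⟨w, p⟩ hσ x hx
      obtain ⟨hlen, hp, hsupp⟩ := hmemA.mp hσ
      rw [hext] at hx
      simp only [Finset.mem_image, Finset.mem_filter] at hx
      obtain ⟨u, ⟨hus, hadj, hun⟩, rfl⟩ := hx
      rw [dif_pos hadj, hmemA]
      refine ⟨by simp [Walk.length_concat, hlen], concat_isPath' hadj hp hun, ?_⟩
      intro x hx
      simp only [Walk.support_concat, List.concat_eq_append, List.mem_append,
        List.mem_singleton] at hx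
      rcases hx with hx | rfl
      · exact hsupp x hx
      · exact hus
    have hdisj : ∀ σ ∈ A ℓ, ∀ τ ∈ A ℓ, σ ≠ τ → Disjoint (ext σ) (ext τ) := by
      rintro ⟨w₁, p₁⟩ h₁ ⟨w₂, p₂⟩ h₂ hne
      rw [Finset.disjoint_left]
      intro x hx₁ hx₂
      rw [hext] at hx₁ hx₂
      simp only [Finset.mem_image, Finset.mem_filter] at hx₁ hx₂
      obtain ⟨u₁, ⟨_, hadj₁, _⟩, he₁⟩ := hx₁
      obtain ⟨u₂, ⟨_, hadj₂, _⟩, he₂⟩ := hx₂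
      rw [dif_pos hadj₁] at he₁
      rw [dif_pos hadj₂] at he₂
      rw [← he₂] at he₁
      obtain ⟨rfl, he⟩ := Sigma.mk.inj_iff.mp he₁
      rw [heq_iff_eq] at he
      obtain ⟨hv, hcopy⟩ := Walk.concat_inj he
      apply hne
      subst hv
      rw [Walk.copy_rfl_rfl] at hcopy
      rw [hcopy]
    calc k * (A ℓ).card = ∑ _σ ∈ A ℓ, k := by
          rw [Finset.sum_const, smul_eq_mul, mul_comm]
      _ ≤ ∑ σ ∈ A ℓ, (ext σ).card := Finset.sum_le_sum hcard
      _ = ((A ℓ).biUnion ext).card := (Finset.card_biUnion hdisj).symm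
      _ ≤ (A (ℓ+1)).card := Finset.card_le_card (Finset.biUnion_subset.mpr hsub)
  -- iterate
  have step3 : ∀ ℓ, 1 ≤ ℓ → ℓ ≤ r → (k+1) * k^(ℓ-1) ≤ (A ℓ).card := by
    intro ℓ
    induction ℓ with
    | zero => omega
    | succ m ih =>
      intro _ hle
      rcases Nat.eq_zero_or_pos m with rfl | hm
      · simpa using step1
      · obtain ⟨m', rfl⟩ : ∃ m', m = m' + 1 := ⟨m - 1, by omega⟩
        have h1 := ih (by omega) (by omega)
        have h2 := step2 (m' + 1) (by omega)
        calc (k+1) * k ^ (m' + 1 + 1 - 1) = k * ((k+1) * k ^ (m' + 1 - 1)) := by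
              simp only [Nat.add_sub_cancel]
              ring
          _ ≤ k * (A (m' + 1)).card := Nat.mul_le_mul_left k h1
          _ ≤ (A (m' + 1 + 1)).card := h2
  have hAr := step3 r hr le_rfl
  -- endpoints are distinct
  have step4 : (A r).card ≤ Fintype.card V := by
    have h := Finset.card_le_card_of_injOn (fun σ => σ.1)
      (fun _ _ => Finset.mem_univ _) (s := A r) (t := (Finset.univ : Finset V)) ?_
    · simpa using h
    · rintro ⟨w₁, p₁⟩ h₁ ⟨w₂, p₂⟩ h₂ hfst
      rw [Finset.mem_coe] at h₁ h₂
      obtain ⟨hl₁, hp₁, -⟩ := hmemA.mp h₁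
      obtain ⟨hl₂, hp₂, -⟩ := hmemA.mp h₂
      dsimp at hfst
      subst hfst
      by_contra hne
      have hpq : p₁ ≠ p₂ := by
        intro e; exact hne (by rw [e])
      obtain ⟨u, c, hc, hclen⟩ := exists_cycle_of_two_paths p₁ p₂ hp₁ hp₂ hpq
      have := hcyc u c hc
      dsimp only at hl₁ hl₂
      omega
  -- contradiction
  have hfin : k ^ r < (k+1) * k^(r-1) := by
    obtain ⟨r', rfl⟩ : ∃ r', r = r' + 1 := ⟨r - 1, by omega⟩
    have hpow : 1 ≤ k ^ r' := Nat.one_le_pow _ _ (by omega)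
    calc k ^ (r' + 1) = k * k ^ r' := by ring
      _ < k * k ^ r' + k ^ r' := by omega
      _ = (k + 1) * k ^ (r' + 1 - 1) := by simp only [Nat.add_sub_cancel]; ring
  exact absurd (le_trans hAr (le_trans step4 hnk)) (not_le.mpr hfin)
end

section
/- Let G be a finite graph, fix a linear order σ on its edge set, and let Ẽ be the set of edges e such that e is the σ-maximum edge of some cycle in G of length at most 2r. Then the graph G̃ = (V, E \ Ẽ) has the same connected components as G: two vertices are connected in G̃ if and only if they are connected in G. -/
open SimpleGraph

/-- The set of edges of `G` that are the `w`-maximum edge of some cycle of `G` of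
length at most `2r` (the edge order is given by an injective weight `w`). -/
def MaxShortCycleEdges {V : Type} (G : SimpleGraph V) (w : Sym2 V → ℕ) (r : ℕ) :
    Set (Sym2 V) :=
  {e | ∃ (x : V) (c : G.Walk x x), c.IsCycle ∧ c.length ≤ 2 * r ∧
    e ∈ c.edges ∧ ∀ e' ∈ c.edges, e' ≠ e → w e' < w e}

lemma reachable_of_walk_small {V : Type} (G : SimpleGraph V) (w : Sym2 V → ℕ) (r : ℕ) :
    ∀ n : ℕ, ∀ x y : V, ∀ p : G.Walk x y, (∀ e ∈ p.edges, w e < n) →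
      (G.deleteEdges (MaxShortCycleEdges G w r)).Reachable x y := by
  haveI := Classical.decEq V
  intro n
  induction n using Nat.strong_induction_on with
  | _ n ih =>
    intro x y p
    induction p with
    | nil => exact fun _ => Reachable.refl _
    | @cons a b cc h q ihq =>
      intro hs
      have hs' : ∀ e ∈ q.edges, w e < n := fun e he => hs e (by simp [he])
      have htail := ihq hs'
      have hhead : (G.deleteEdges (MaxShortCycleEdges G w r)).Reachable a b := by
        by_cases he : s(a, b) ∈ MaxShortCycleEdges G w r
        · obtain ⟨x0, c, hc, _, hec, hmax⟩ := he
          have hkey : w s(a, b) < n := hs _ (by simp)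
          have ha : a ∈ c.support := Walk.fst_mem_support_of_mem_edges c hec
          set d := c.rotate a ha with hd
          have hperm : List.Perm d.edges c.edges := (c.rotate_edges a ha).perm
          have hed : s(a, b) ∈ d.edges := hperm.mem_iff.mpr hec
          have hb : b ∈ d.support := Walk.snd_mem_support_of_mem_edges d hed
          have hsplit : (d.takeUntil b hb).edges ++ (d.dropUntil b hb).edges = d.edges := by
            rw [← Walk.edges_append, Walk.take_spec]
          have hnd : d.edges.Nodup := hperm.nodup_iff.mpr hc.edges_nodup
          have hdisj : ∀ e', e' ∈ (d.takeUntil b hb).edges →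
              e' ∉ (d.dropUntil b hb).edges := by
            intro e' h1 h2
            have := hnd
            rw [← hsplit, List.nodup_append] at this
            exact this.2.2 _ h1 _ h2 rfl
          by_cases h1 : s(a, b) ∈ (d.takeUntil b hb).edges
          · -- use the drop part, which avoids s(a,b)
            refine (ih (w s(a, b)) hkey b a (d.dropUntil b hb) ?_).symm
            intro e' he'
            have hmem : e' ∈ c.edges := hperm.mem_iff.mp (hsplit ▸ List.mem_append_right _ he')
            exact hmax e' hmem (by rintro rfl; exact hdisj _ h1 he')
          · refine ih (w s(a, b)) hkey a b (d.takeUntil b hb) ?_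
            intro e' he'
            have hmem : e' ∈ c.edges := hperm.mem_iff.mp (hsplit ▸ List.mem_append_left _ he')
            exact hmax e' hmem (fun heq => h1 (heq ▸ he'))
        · exact (SimpleGraph.deleteEdges_adj.mpr ⟨h, he⟩).reachable
      exact hhead.trans htail

theorem delete_max_short_cycle_edges_preserves_components {V : Type} [Fintype V]
    (G : SimpleGraph V) (w : Sym2 V → ℕ) (hw : Function.Injective w) (r : ℕ)
    (hr : 1 ≤ r) :
    ∀ u v : V, (G.deleteEdges (MaxShortCycleEdges G w r)).Reachable u v ↔
      G.Reachable u v := by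
  intro u v
  constructor
  · exact fun h => h.mono (deleteEdges_le _)
  · rintro ⟨p⟩
    refine reachable_of_walk_small G w r ((p.edges.map w).sum + 1) u v p ?_
    intro e he
    exact Nat.lt_succ_of_le
      (List.single_le_sum (fun _ _ => Nat.zero_le _) _ (List.mem_map_of_mem (f := w) he))
end

section
/- Let f : ℤ^n → 𝔽_p be a linear map injective on d-sparse Boolean vectors. Suppose G is a finite graph on vertex set {1,…,n} and for each vertex i we know the pair (deg(i), f(a_i)) where a_i ∈ {0,1}^n is row i of the adjacency matrix. If vertex k has deg(k) ≤ d, then a_k is uniquely determined, and the message pairs for the graph G − {k} can be computed without further knowledge of G: for each neighbor j of k, the new pair is (deg(j) − 1, f(a_j) − f(e_k)), where e_k is the k-th standard basis vector. -/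
open SimpleGraph

/-- Row `i` of the adjacency matrix of `G`. -/
def adjRow {n : ℕ} (G : SimpleGraph (Fin n)) [DecidableRel G.Adj] (i : Fin n) :
    Fin n → ℤ :=
  fun j => if G.Adj i j then 1 else 0

lemma adjRow_sparse {n d : ℕ} (G : SimpleGraph (Fin n)) [DecidableRel G.Adj]
    (k : Fin n) (hk : G.degree k ≤ d) : SparseBool n d (adjRow G k) := by
  constructor
  · intro i
    by_cases h : G.Adj k i <;> simp [adjRow, h]
  · have : (Finset.univ.filter fun i => adjRow G k i ≠ 0) = G.neighborFinset k := by
      ext i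
      by_cases h : G.Adj k i <;> simp [adjRow, h]
    rw [this, SimpleGraph.card_neighborFinset_eq_degree]
    exact hk

theorem pruning_step_correct {n d p : ℕ} (f : (Fin n → ℤ) →ₗ[ℤ] ZMod p)
    (hf : Set.InjOn f {v | SparseBool n d v})
    (G : SimpleGraph (Fin n)) [DecidableRel G.Adj] (k : Fin n)
    (hk : G.degree k ≤ d) :
    (∀ b : Fin n → ℤ, SparseBool n d b → f b = f (adjRow G k) → b = adjRow G k) ∧
    (∀ j : Fin n, G.Adj k j →
      ((G.deleteEdges {e | k ∈ e}).neighborSet j).ncard = G.degree j - 1 ∧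
      ∀ [DecidableRel (G.deleteEdges {e | k ∈ e}).Adj],
        f (adjRow (G.deleteEdges {e | k ∈ e}) j) =
          f (adjRow G j) - f (Pi.single k 1)) ∧
    (∀ j : Fin n, j ≠ k → ¬ G.Adj k j →
      ((G.deleteEdges {e | k ∈ e}).neighborSet j).ncard = G.degree j ∧
      ∀ [DecidableRel (G.deleteEdges {e | k ∈ e}).Adj],
        f (adjRow (G.deleteEdges {e | k ∈ e}) j) = f (adjRow G j)) := by
  set G' := G.deleteEdges {e | k ∈ e} with hG'
  have hadj : ∀ a b : Fin n, G'.Adj a b ↔ G.Adj a b ∧ ¬(k = a ∨ k = b) := by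
    intro a b
    rw [hG', SimpleGraph.deleteEdges_adj]
    simp [Sym2.mem_iff]
  have hdegset : ∀ j, (G.neighborSet j).ncard = G.degree j := by
    intro j
    rw [Set.ncard_eq_toFinset_card', ← SimpleGraph.neighborFinset_def,
      SimpleGraph.card_neighborFinset_eq_degree]
  refine ⟨?_, ?_, ?_⟩
  · intro b hb hfb
    exact hf hb (adjRow_sparse G k hk) hfb
  · intro j hj
    have hkj : k ≠ j := G.ne_of_adj hj
    constructor
    · have hset : G'.neighborSet j = G.neighborSet j \ {k} := by
        ext x
        simp only [SimpleGraph.mem_neighborSet, hadj, Set.mem_diff,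
          Set.mem_singleton_iff]
        constructor
        · rintro ⟨h1, h2⟩
          exact ⟨h1, fun hx => h2 (Or.inr hx.symm)⟩
        · rintro ⟨h1, h2⟩
          refine ⟨h1, ?_⟩
          rintro (h | h)
          · exact hkj h
          · exact h2 h.symm
      rw [hset, Set.ncard_diff_singleton_of_mem (show k ∈ G.neighborSet j from hj.symm),
        hdegset]
    · intro _
      have heq : adjRow G' j = adjRow G j - Pi.single k 1 := by
        funext i
        simp only [adjRow, Pi.sub_apply]
        by_cases hik : i = k
        · subst hik
          have : ¬ G'.Adj j i := by
            rw [hadj]; tauto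
          simp [this, hj.symm, Pi.single_eq_same]
        · have : G'.Adj j i ↔ G.Adj j i := by
            rw [hadj]
            constructor
            · exact fun h => h.1
            · intro h
              refine ⟨h, ?_⟩
              rintro (h1 | h1)
              · exact hkj h1
              · exact hik h1.symm
          rw [Pi.single_eq_of_ne hik]
          by_cases h : G.Adj j i <;> simp [this, h]
      rw [heq, map_sub]
  · intro j hjk hnadj
    have hset : G'.neighborSet j = G.neighborSet j := by
      ext x
      simp only [SimpleGraph.mem_neighborSet, hadj]
      constructor
      · exact fun h => h.1
      · intro h
        refine ⟨h, ?_⟩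
        rintro (h1 | h1)
        · exact hjk h1.symm
        · subst h1; exact hnadj h.symm
    refine ⟨by rw [hset, hdegset], ?_⟩
    intro _
    have heq : adjRow G' j = adjRow G j := by
      funext i
      simp only [adjRow]
      have : G'.Adj j i ↔ G.Adj j i := by
        constructor
        · exact fun h => ((hadj j i).1 h).1
        · intro h
          rw [hadj]
          refine ⟨h, ?_⟩
          rintro (h1 | h1)
          · exact hjk h1.symm
          · subst h1; exact hnadj h.symm
      by_cases h : G.Adj j i <;> simp [this, h]
    rw [heq]
end
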